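/- Let v : [0, ∞) → ℝ be continuous, nonnegative, with v(ξ) ~ a(Ψ − ψ(ξ)) as ξ → ∞, where ψ(ξ) = ∫₀^ξ v, a > 0, and Ψ = ∫₀^∞ v < ∞. Then ψ(ξ) → Ψ and Ψ − ψ(ξ) = O(e^{−(a−ε)ξ}) for every ε ∈ (0, a); in particular v decays exponentially. -/

import Mathlib

open MeasureTheory Asymptotics Filter in
/-- if `v ≥ 0` is continuous and integrable on `(0,∞)` with total mass
`Ψ`, `ψ(ξ) = ∫₀^ξ v`, and `v(ξ) ~ a(Ψ − ψ(ξ))` as `ξ → ∞` with `a > 0`, then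
`ψ(ξ) → Ψ` and `Ψ − ψ(ξ) = O(e^{−(a−ε)ξ})` for every `ε ∈ (0, a)`. -/
theorem decay_condition_forces_exponential_decay (v : ℝ → ℝ)
    (hv_cont : Continuous v) (hv_nonneg : ∀ ξ, 0 ≤ v ξ)
    (hv_int : IntegrableOn v (Set.Ioi 0))
    (ψ : ℝ → ℝ) (hψ : ∀ ξ, ψ ξ = ∫ s in (0 : ℝ)..ξ, v s)
    (Ψ : ℝ) (hΨ : Ψ = ∫ s in Set.Ioi (0 : ℝ), v s)
    (a : ℝ) (ha : 0 < a)
    (hasymp : (fun ξ => v ξ - a * (Ψ - ψ ξ)) =o[atTop] fun ξ => Ψ - ψ ξ) :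
    Tendsto ψ atTop (nhds Ψ) ∧
    ∀ ε ∈ Set.Ioo 0 a,
      (fun ξ => Ψ - ψ ξ) =O[atTop] fun ξ => Real.exp (-(a - ε) * ξ) := by
  have hψfun : ψ = fun u => ∫ s in (0 : ℝ)..u, v s := funext hψ
  -- derivative of ψ
  have hψd : ∀ ξ : ℝ, HasDerivAt ψ (v ξ) ξ := by
    intro ξ
    rw [hψfun]
    exact (intervalIntegral.integral_hasStrictDerivAt_right
      (hv_cont.intervalIntegrable 0 ξ) (hv_cont.stronglyMeasurableAtFilter _ _)
      hv_cont.continuousAt).hasDerivAt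
  -- ψ ≤ Ψ for ξ ≥ 0
  have hg0 : ∀ ξ : ℝ, 0 ≤ ξ → ψ ξ ≤ Ψ := by
    intro ξ hξ
    rw [hψ, hΨ, intervalIntegral.integral_of_le hξ]
    exact setIntegral_mono_set hv_int
      (Filter.Eventually.of_forall fun x => hv_nonneg x)
      (HasSubset.Subset.eventuallyLE Set.Ioc_subset_Ioi_self)
  have htend : Tendsto ψ atTop (nhds Ψ) := by
    rw [hψfun, hΨ]
    exact intervalIntegral_tendsto_integral_Ioi 0 hv_int tendsto_id
  refine ⟨htend, ?_⟩
  rintro ε ⟨hε0, hεa⟩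
  set b : ℝ := a - ε with hb
  have hbpos : 0 < b := by simp [hb]; linarith
  -- eventual bound
  have hev : ∀ᶠ ξ in atTop, |v ξ - a * (Ψ - ψ ξ)| ≤ ε * |Ψ - ψ ξ| := by
    have := hasymp.def hε0
    filter_upwards [this] with ξ h using by simpa [Real.norm_eq_abs] using h
  obtain ⟨R, hR⟩ := ((hev.and (eventually_ge_atTop (0:ℝ))).and (eventually_ge_atTop (0:ℝ))).exists_forall_of_atTop
  set h : ℝ → ℝ := fun ξ => (Ψ - ψ ξ) * Real.exp (b * ξ) with hhdef
  have hd : ∀ x : ℝ, HasDerivAt h ((b * (Ψ - ψ x) - v x) * Real.exp (b * x)) x := by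
    intro x
    have h1 : HasDerivAt (fun ξ => Ψ - ψ ξ) (-(v x)) x := by
      exact ((hasDerivAt_const x Ψ).sub (hψd x)).congr_deriv (zero_sub _)
    have h2 : HasDerivAt (fun ξ : ℝ => Real.exp (b * ξ)) (Real.exp (b * x) * b) x := by
      simpa using ((hasDerivAt_id x).const_mul b).exp
    have := h1.mul h2
    exact this.congr_deriv (by ring)
  have hanti : AntitoneOn h (Set.Ici R) := by
    apply antitoneOn_of_deriv_nonpos (convex_Ici R)
    · exact fun x _ => ((hd x).continuousAt).continuousWithinAt
    · exact fun x _ => ((hd x).differentiableAt).differentiableWithinAt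
    · intro x hx
      rw [interior_Ici] at hx
      rw [(hd x).deriv]
      obtain ⟨⟨hb1, hx0⟩, _⟩ := hR x (le_of_lt hx)
      have hgn : 0 ≤ Ψ - ψ x := by linarith [hg0 x hx0]
      have : a * (Ψ - ψ x) - v x ≤ ε * (Ψ - ψ x) := by
        have := neg_abs_le (v x - a * (Ψ - ψ x))
        rw [abs_of_nonneg hgn] at hb1
        linarith
      have hnp : b * (Ψ - ψ x) - v x ≤ 0 := by rw [hb]; nlinarith
      exact mul_nonpos_of_nonpos_of_nonneg hnp (Real.exp_pos _).le
  rw [isBigO_iff]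
  refine ⟨(Ψ - ψ R) * Real.exp (b * R), ?_⟩
  filter_upwards [eventually_ge_atTop R] with ξ hξ
  obtain ⟨⟨_, hξ0⟩, _⟩ := hR ξ hξ
  obtain ⟨⟨_, hR0⟩, _⟩ := hR R le_rfl
  have hgn : 0 ≤ Ψ - ψ ξ := by linarith [hg0 ξ hξ0]
  have hkey : h ξ ≤ h R := hanti Set.self_mem_Ici hξ hξ
  have hexp : (0:ℝ) < Real.exp (b * ξ) := Real.exp_pos _
  rw [Real.norm_eq_abs, Real.norm_eq_abs, abs_of_nonneg hgn,
    abs_of_pos (Real.exp_pos _)]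
  have : -(a - ε) * ξ = -(b * ξ) := by rw [hb]; ring
  rw [this, Real.exp_neg]
  rw [hhdef] at hkey
  simp only at hkey
  rw [← div_eq_mul_inv, le_div_iff₀ hexp]
  exact hkey
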